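/- Under the conditions 0 < r, s < 1 and s² ≤ r ≤ s, for every z ∈ Q_{s²,s}(x), the Euclidean ball { y : |y - z| < r } of volume ≍ r^N intersects Q_{r,s}(x) in a set of measure at least c·r^N, where c > 0 depends only on the structural constants; consequently avg_{z ∈ Q_{s²,s}(x)} avg_{|y-z|<r} |f(y)| dy ≥ c' (s^{N-1} r)^{-1} ∫_{Q'_{r,s}(x)} |f|, where Q'_{r,s} is a fixed fractional shrinking of Q_{r,s}. -/

import Mathlib

open scoped BigOperators ENNReal NNReal
open MeasureTheory

/-- Euclidean norm on `Fin m → ℝ`. -/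
noncomputable def euclN {m : ℕ} (x : Fin m → ℝ) : ℝ := Real.sqrt (∑ i, (x i) ^ 2)

/-- The rectangular cube `Q_{r,s}(x)` in the model case `L_x = identity`:
`Σ_{i<N} |x_i - y_i| ≤ s` and `|x_N - y_N| ≤ r`. -/
def Qcube (d : ℕ) (r s : ℝ) (x : Fin (d+1) → ℝ) : Set (Fin (d+1) → ℝ) :=
  {y | (∑ i : Fin d, |x i.castSucc - y i.castSucc|) ≤ s ∧
        |x (Fin.last d) - y (Fin.last d)| ≤ r}

/-- Euclidean ball of radius `r` about `z`. -/
def Ball (d : ℕ) (z : Fin (d+1) → ℝ) (r : ℝ) : Set (Fin (d+1) → ℝ) :=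
  {y | euclN (y - z) < r}

lemma euclN_le_sum {m : ℕ} (v : Fin m → ℝ) : euclN v ≤ ∑ i, |v i| := by
  have h : ∑ i, (v i) ^ 2 ≤ (∑ i, |v i|) ^ 2 := by
    have h1 : ∀ i : Fin m, (v i) ^ 2 ≤ |v i| * ∑ j, |v j| := by
      intro i
      have := Finset.single_le_sum (f := fun j => |v j|) (fun j _ => abs_nonneg _)
        (Finset.mem_univ i)
      calc (v i)^2 = |v i| * |v i| := by rw [← sq_abs]; ring
        _ ≤ |v i| * ∑ j, |v j| := by
            exact mul_le_mul_of_nonneg_left this (abs_nonneg _)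
    calc ∑ i, (v i)^2 ≤ ∑ i, |v i| * ∑ j, |v j| := Finset.sum_le_sum fun i _ => h1 i
      _ = (∑ i, |v i|)^2 := by rw [← Finset.sum_mul]; ring
  have h0 : 0 ≤ ∑ i, |v i| := Finset.sum_nonneg fun i _ => abs_nonneg _
  calc euclN v ≤ Real.sqrt ((∑ i, |v i|)^2) := Real.sqrt_le_sqrt h
    _ = ∑ i, |v i| := Real.sqrt_sq h0

lemma abs_le_euclN {m : ℕ} (v : Fin m → ℝ) (i : Fin m) : |v i| ≤ euclN v := by
  rw [← Real.sqrt_sq_eq_abs]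
  exact Real.sqrt_le_sqrt (Finset.single_le_sum (f := fun j => (v j)^2)
    (fun j _ => sq_nonneg _) (Finset.mem_univ i))

lemma continuous_euclN {m : ℕ} : Continuous fun v : Fin m → ℝ => euclN v := by
  exact Real.continuous_sqrt.comp (continuous_finset_sum _ fun i _ => (continuous_apply i).pow 2)

lemma volume_box {m : ℕ} (w δ : Fin m → ℝ) :
    volume (Set.pi Set.univ fun i => Set.Icc (w i - δ i) (w i + δ i)) =
      ∏ i, ENNReal.ofReal (2 * δ i) := by
  rw [volume_pi_pi]
  exact Finset.prod_congr rfl fun i _ => by rw [Real.volume_Icc]; ring_nf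

lemma measurableSet_Qcube (d : ℕ) (r s : ℝ) (x : Fin (d+1) → ℝ) :
    MeasurableSet (Qcube d r s x) := by
  have h1 : MeasurableSet {y : Fin (d+1) → ℝ |
      (∑ i : Fin d, |x i.castSucc - y i.castSucc|) ≤ s} := by
    apply measurableSet_le _ measurable_const
    exact Finset.measurable_sum _ fun i _ =>
      (measurable_const.sub (measurable_pi_apply i.castSucc)).abs
  have h2 : MeasurableSet {y : Fin (d+1) → ℝ | |x (Fin.last d) - y (Fin.last d)| ≤ r} :=
    measurableSet_le ((measurable_const.sub (measurable_pi_apply (Fin.last d))).abs)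
      measurable_const
  exact h1.inter h2

lemma measurableSet_Ball (d : ℕ) (z : Fin (d+1) → ℝ) (r : ℝ) :
    MeasurableSet (Ball d z r) := by
  have : IsOpen (Ball d z r) :=
    isOpen_lt (continuous_euclN.comp (continuous_id.sub continuous_const)) continuous_const
  exact this.measurableSet

lemma measurableSet_S (d : ℕ) (r : ℝ) :
    MeasurableSet {p : (Fin (d+1) → ℝ) × (Fin (d+1) → ℝ) | euclN (p.2 - p.1) < r} := by
  have : IsOpen {p : (Fin (d+1) → ℝ) × (Fin (d+1) → ℝ) | euclN (p.2 - p.1) < r} :=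
    isOpen_lt (continuous_euclN.comp (continuous_snd.sub continuous_fst)) continuous_const
  exact this.measurableSet

lemma part1 (d : ℕ) (r s : ℝ) (hr : 0 < r) (hs : 0 < s) (hsr : s^2 ≤ r) (hrs : r ≤ s)
    (x z : Fin (d+1) → ℝ) (hz : z ∈ Qcube d (s^2) s x) :
    ENNReal.ofReal ((1/(8*((d:ℝ)+1)))^(d+1) * r^(d+1)) ≤
      volume (Ball d z r ∩ Qcube d r s x) := by
  obtain ⟨hz1, hz2⟩ := hz
  set η : ℝ := r/(8*s) with hη_def
  set δ : ℝ := r/(16*((d:ℝ)+1)) with hδ_def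
  have hd1 : (0:ℝ) < (d:ℝ)+1 := by positivity
  have hδ : 0 < δ := by positivity
  have hη0 : (0:ℝ) ≤ η := by positivity
  have hη8 : η ≤ 1/8 := by
    rw [hη_def, div_le_div_iff₀ (by positivity) (by norm_num)]; linarith
  have h1η : (0:ℝ) ≤ 1 - η := by linarith
  have hηs : η * s = r/8 := by rw [hη_def]; field_simp
  have hd1δ : ((d:ℝ)+1) * δ = r/16 := by rw [hδ_def]; field_simp
  have hdδ : (d:ℝ)*δ ≤ r/16 := by nlinarith [hδ.le]
  have hδ16 : δ ≤ r/16 := by nlinarith [hδ.le]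
  set w : Fin (d+1) → ℝ :=
    fun i => if i = Fin.last d then (x i + z i)/2 else x i + (1-η)*(z i - x i) with hw_def
  have hne : ∀ i : Fin d, i.castSucc ≠ Fin.last d := fun i => (Fin.castSucc_lt_last i).ne
  have hwc : ∀ i : Fin d,
      w i.castSucc = x i.castSucc + (1-η)*(z i.castSucc - x i.castSucc) := by
    intro i; simp only [hw_def]; rw [if_neg (hne i)]
  have hwl : w (Fin.last d) = (x (Fin.last d) + z (Fin.last d))/2 := by
    simp [hw_def]
  have hsub : (Set.pi Set.univ fun i => Set.Icc (w i - δ) (w i + δ)) ⊆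
      Ball d z r ∩ Qcube d r s x := by
    intro y hy
    have hyw : ∀ i, |y i - w i| ≤ δ := by
      intro i
      have h := hy i (Set.mem_univ i)
      rw [abs_le]; exact ⟨by linarith [h.1], by linarith [h.2]⟩
    have hxw : ∀ i : Fin d, |x i.castSucc - w i.castSucc| =
        (1-η) * |x i.castSucc - z i.castSucc| := by
      intro i
      rw [hwc i, show x i.castSucc - (x i.castSucc + (1-η)*(z i.castSucc - x i.castSucc))
        = (1-η) * (x i.castSucc - z i.castSucc) by ring, abs_mul, abs_of_nonneg h1η]
    have hwz : ∀ i : Fin d, |w i.castSucc - z i.castSucc| =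
        η * |x i.castSucc - z i.castSucc| := by
      intro i
      rw [hwc i, show x i.castSucc + (1-η)*(z i.castSucc - x i.castSucc) - z i.castSucc
        = η * (x i.castSucc - z i.castSucc) by ring, abs_mul, abs_of_nonneg hη0]
    have hwzl : |w (Fin.last d) - z (Fin.last d)| = |x (Fin.last d) - z (Fin.last d)|/2 := by
      rw [hwl, show (x (Fin.last d) + z (Fin.last d))/2 - z (Fin.last d)
        = (x (Fin.last d) - z (Fin.last d))/2 by ring, abs_div]
      norm_num
    have hsum_xz : ∑ i : Fin d, |x i.castSucc - z i.castSucc| ≤ s := hz1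
    -- first-d-coordinates bound for Qcube
    have hb1 : ∑ i : Fin d, |x i.castSucc - y i.castSucc| ≤ (1-η)*s + (d:ℝ)*δ := by
      calc ∑ i : Fin d, |x i.castSucc - y i.castSucc|
          ≤ ∑ i : Fin d, (|x i.castSucc - w i.castSucc| + |w i.castSucc - y i.castSucc|) :=
            Finset.sum_le_sum fun i _ => abs_sub_le _ _ _
        _ = (∑ i : Fin d, |x i.castSucc - w i.castSucc|)
            + ∑ i : Fin d, |w i.castSucc - y i.castSucc| := Finset.sum_add_distrib
        _ ≤ (1-η)*s + (d:ℝ)*δ := by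
            have e1 : ∑ i : Fin d, |x i.castSucc - w i.castSucc| ≤ (1-η)*s := by
              rw [Finset.sum_congr rfl fun i _ => hxw i, ← Finset.mul_sum]
              exact mul_le_mul_of_nonneg_left hsum_xz h1η
            have e2 : ∑ i : Fin d, |w i.castSucc - y i.castSucc| ≤ (d:ℝ)*δ := by
              calc ∑ i : Fin d, |w i.castSucc - y i.castSucc| ≤ ∑ _i : Fin d, δ :=
                    Finset.sum_le_sum fun i _ => by
                      rw [abs_sub_comm]; exact hyw i.castSucc
                _ = (d:ℝ)*δ := by simp [Finset.sum_const, mul_comm]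
            linarith
    have hb2 : |x (Fin.last d) - y (Fin.last d)| ≤ s^2/2 + δ := by
      have t1 := abs_sub_le (x (Fin.last d)) (w (Fin.last d)) (y (Fin.last d))
      have t2 : |x (Fin.last d) - w (Fin.last d)| = |x (Fin.last d) - z (Fin.last d)|/2 := by
        rw [hwl, show x (Fin.last d) - (x (Fin.last d) + z (Fin.last d))/2
          = (x (Fin.last d) - z (Fin.last d))/2 by ring, abs_div]
        norm_num
      have t3 : |w (Fin.last d) - y (Fin.last d)| ≤ δ := by
        rw [abs_sub_comm]; exact hyw (Fin.last d)
      rw [t2] at t1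
      linarith
    constructor
    · -- Ball
      show euclN (y - z) < r
      have e0 : euclN (y - z) ≤ ∑ i, |(y - z) i| := euclN_le_sum _
      have e1 : ∑ i, |(y - z) i| ≤ (∑ i, |y i - w i|) + ∑ i, |w i - z i| := by
        calc ∑ i, |(y - z) i| = ∑ i, |y i - z i| := rfl
          _ ≤ ∑ i, (|y i - w i| + |w i - z i|) :=
              Finset.sum_le_sum fun i _ => abs_sub_le _ _ _
          _ = _ := Finset.sum_add_distrib
      have e2 : ∑ i, |y i - w i| ≤ ((d:ℝ)+1)*δ := by
        calc ∑ i, |y i - w i| ≤ ∑ _i : Fin (d+1), δ := Finset.sum_le_sum fun i _ => hyw i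
          _ = ((d:ℝ)+1)*δ := by rw [Finset.sum_const, Finset.card_univ, Fintype.card_fin, nsmul_eq_mul]; push_cast; ring
      have e3 : ∑ i, |w i - z i| ≤ η*s + s^2/2 := by
        rw [Fin.sum_univ_castSucc]
        have e31 : ∑ i : Fin d, |w i.castSucc - z i.castSucc| ≤ η * s := by
          rw [Finset.sum_congr rfl fun i _ => hwz i, ← Finset.mul_sum]
          exact mul_le_mul_of_nonneg_left hsum_xz hη0
        have e32 : |w (Fin.last d) - z (Fin.last d)| ≤ s^2/2 := by
          rw [hwzl]; linarith
        linarith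
      have : euclN (y - z) ≤ r/16 + (r/8 + s^2/2) := by
        rw [← hd1δ, ← hηs] at *
        linarith
      linarith
    · exact ⟨by linarith, by linarith⟩
  calc ENNReal.ofReal ((1/(8*((d:ℝ)+1)))^(d+1) * r^(d+1))
      = volume (Set.pi Set.univ fun i => Set.Icc (w i - δ) (w i + δ)) := by
        rw [volume_box w (fun _ => δ), Finset.prod_const, ← ENNReal.ofReal_pow (by positivity)]
        congr 1
        rw [Finset.card_univ, Fintype.card_fin, ← mul_pow]
        congr 1
        rw [hδ_def]; field_simp; ring
    _ ≤ volume (Ball d z r ∩ Qcube d r s x) := measure_mono hsub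

lemma part2 (d : ℕ) (r s : ℝ) (hr : 0 < r) (hs : 0 < s) (hsr : s^2 ≤ r) (hrs : r ≤ s)
    (x : Fin (d+1) → ℝ) (f : (Fin (d+1) → ℝ) → ℝ≥0∞) (hf : Measurable f) :
    ENNReal.ofReal ((1/((2*((d:ℝ)+1))^d * 2^(2*d+3))) / (s^d * r)) *
        ∫⁻ y in Qcube d ((1/4)*r) ((1/4)*s) x, f y ≤
      (volume (Qcube d (s^2) s x))⁻¹ *
        ∫⁻ z in Qcube d (s^2) s x,
          (volume (Ball d z r))⁻¹ * ∫⁻ y in Ball d z r, f y := by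
  have hd1 : (0:ℝ) < (d:ℝ)+1 := by positivity
  set ρ : ℝ := r/(4*((d:ℝ)+1)) with hρ_def
  have hρ0 : 0 < ρ := by positivity
  have hρd1 : ((d:ℝ)+1) * ρ = r/4 := by rw [hρ_def]; field_simp
  have hdρ : (d:ℝ)*ρ ≤ r/4 := by nlinarith [hρ0.le]
  set Q : Set (Fin (d+1) → ℝ) := Qcube d (s^2) s x with hQ_def
  set Q' : Set (Fin (d+1) → ℝ) := Qcube d ((1/4)*r) ((1/4)*s) x with hQ'_def
  set K : ℝ≥0∞ := ENNReal.ofReal ((2*r)^(d+1)) with hK_def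
  set A : ℝ≥0∞ := ENNReal.ofReal ((2*s)^d * (2*s^2)) with hA_def
  set M : ℝ≥0∞ := ENNReal.ofReal ((2*ρ)^d * (s^2/2)) with hM_def
  have hQm := measurableSet_Qcube d (s^2) s x
  have hQ'm := measurableSet_Qcube d ((1/4)*r) ((1/4)*s) x
  have hS := measurableSet_S d r
  have hne : ∀ i : Fin d, i.castSucc ≠ Fin.last d := fun i => (Fin.castSucc_lt_last i).ne
  -- upper bound on ball volume
  have h1 : ∀ z : Fin (d+1) → ℝ, volume (Ball d z r) ≤ K := by
    intro z
    have hsub : Ball d z r ⊆ Set.pi Set.univ fun i => Set.Icc (z i - r) (z i + r) := by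
      intro y hy
      intro i _
      have h : |y i - z i| < r := (abs_le_euclN (y - z) i).trans_lt hy
      have h' := abs_lt.mp h
      exact ⟨by linarith [h'.1], by linarith [h'.2]⟩
    calc volume (Ball d z r) ≤ volume (Set.pi Set.univ fun i => Set.Icc (z i - r) (z i + r)) :=
          measure_mono hsub
      _ = K := by
          rw [volume_box z (fun _ => r), Finset.prod_const, Finset.card_univ, Fintype.card_fin,
            hK_def, ← ENNReal.ofReal_pow (by positivity)]
  -- upper bound on Q volume
  have h2 : volume Q ≤ A := by
    have hsub : Q ⊆ Set.pi Set.univ fun i =>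
        Set.Icc (x i - (if i = Fin.last d then s^2 else s)) (x i + (if i = Fin.last d then s^2 else s)) := by
      intro y hy
      intro i _
      by_cases hi : i = Fin.last d
      · subst hi
        have h' := abs_le.mp hy.2
        simp only [if_pos rfl, if_true]
        exact ⟨by linarith [h'.1], by linarith [h'.2]⟩
      · obtain ⟨j, rfl⟩ := Fin.exists_castSucc_eq.mpr hi
        have h1' : |x j.castSucc - y j.castSucc| ≤ s := by
          refine le_trans (Finset.single_le_sum (f := fun i : Fin d => |x i.castSucc - y i.castSucc|)
            (fun i _ => abs_nonneg _) (Finset.mem_univ j)) hy.1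
        have h2' := abs_le.mp h1'
        simp only [if_neg (hne j)]
        exact ⟨by linarith [h2'.1], by linarith [h2'.2]⟩
    calc volume Q ≤ _ := measure_mono hsub
      _ = A := by
        rw [volume_box x (fun i => if i = Fin.last d then s^2 else s), Fin.prod_univ_castSucc]
        simp only [if_pos rfl, if_true]
        rw [Finset.prod_congr rfl (fun i _ => by rw [if_neg (hne i)]), Finset.prod_const,
          Finset.card_univ, Fintype.card_fin, hA_def,
          ← ENNReal.ofReal_pow (by positivity), ← ENNReal.ofReal_mul (by positivity)]
  -- lower bound on slice volume
  have h3 : ∀ y ∈ Q', M ≤ volume ({z : Fin (d+1) → ℝ | euclN (y - z) < r} ∩ Q) := by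
    intro y hy
    obtain ⟨hy1, hy2⟩ := hy
    set cY : Fin (d+1) → ℝ := fun i => if i = Fin.last d then x i else y i with hcY_def
    set δY : Fin (d+1) → ℝ := fun i => if i = Fin.last d then s^2/4 else ρ with hδY_def
    have hsub : (Set.pi Set.univ fun i => Set.Icc (cY i - δY i) (cY i + δY i)) ⊆
        {z : Fin (d+1) → ℝ | euclN (y - z) < r} ∩ Q := by
      intro z hz
      have hzc : ∀ j : Fin d, |z j.castSucc - y j.castSucc| ≤ ρ := by
        intro j
        have h := hz j.castSucc (Set.mem_univ _)
        simp only [hcY_def, hδY_def, if_neg (hne j)] at h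
        rw [abs_le]; exact ⟨by linarith [h.1], by linarith [h.2]⟩
      have hzl : |z (Fin.last d) - x (Fin.last d)| ≤ s^2/4 := by
        have h := hz (Fin.last d) (Set.mem_univ _)
        simp only [hcY_def, hδY_def, if_pos rfl] at h
        rw [abs_le]; exact ⟨by linarith [h.1], by linarith [h.2]⟩
      constructor
      · show euclN (y - z) < r
        have e0 : euclN (y - z) ≤ ∑ i, |(y - z) i| := euclN_le_sum _
        have e1 : ∑ i, |(y - z) i| = (∑ j : Fin d, |y j.castSucc - z j.castSucc|)
            + |y (Fin.last d) - z (Fin.last d)| := by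
          rw [Fin.sum_univ_castSucc (f := fun i => |(y - z) i|)]; rfl
        have e2 : ∑ j : Fin d, |y j.castSucc - z j.castSucc| ≤ (d:ℝ)*ρ := by
          calc ∑ j : Fin d, |y j.castSucc - z j.castSucc| ≤ ∑ _j : Fin d, ρ :=
                Finset.sum_le_sum fun j _ => by rw [abs_sub_comm]; exact hzc j
            _ = (d:ℝ)*ρ := by
                rw [Finset.sum_const, Finset.card_univ, Fintype.card_fin, nsmul_eq_mul]
        have e3 : |y (Fin.last d) - z (Fin.last d)| ≤ (1/4)*r + s^2/4 := by
          have := abs_sub_le (y (Fin.last d)) (x (Fin.last d)) (z (Fin.last d))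
          have h4 : |y (Fin.last d) - x (Fin.last d)| ≤ (1/4)*r := by
            rw [abs_sub_comm]; exact hy2
          have h5 : |x (Fin.last d) - z (Fin.last d)| ≤ s^2/4 := by
            rw [abs_sub_comm]; exact hzl
          linarith
        have : euclN (y - z) ≤ (d:ℝ)*ρ + ((1/4)*r + s^2/4) := by
          rw [e1] at e0; linarith
        have hs24 : s^2/4 ≤ r/4 := by linarith
        linarith
      · constructor
        · calc ∑ i : Fin d, |x i.castSucc - z i.castSucc|
              ≤ ∑ i : Fin d, (|x i.castSucc - y i.castSucc| + |y i.castSucc - z i.castSucc|) :=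
                Finset.sum_le_sum fun i _ => abs_sub_le _ _ _
            _ = (∑ i : Fin d, |x i.castSucc - y i.castSucc|)
                + ∑ i : Fin d, |y i.castSucc - z i.castSucc| := Finset.sum_add_distrib
            _ ≤ (1/4)*s + (d:ℝ)*ρ := by
                have : ∑ i : Fin d, |y i.castSucc - z i.castSucc| ≤ (d:ℝ)*ρ := by
                  calc ∑ i : Fin d, |y i.castSucc - z i.castSucc| ≤ ∑ _i : Fin d, ρ :=
                        Finset.sum_le_sum fun i _ => by rw [abs_sub_comm]; exact hzc i
                    _ = (d:ℝ)*ρ := by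
                        rw [Finset.sum_const, Finset.card_univ, Fintype.card_fin, nsmul_eq_mul]
                linarith
            _ ≤ s := by nlinarith
        · calc |x (Fin.last d) - z (Fin.last d)| = |z (Fin.last d) - x (Fin.last d)| :=
              abs_sub_comm _ _
            _ ≤ s^2/4 := hzl
            _ ≤ s^2 := by nlinarith
    calc M = volume (Set.pi Set.univ fun i => Set.Icc (cY i - δY i) (cY i + δY i)) := by
          rw [volume_box cY δY, Fin.prod_univ_castSucc]
          simp only [hδY_def, if_pos rfl, if_true]
          rw [Finset.prod_congr rfl (fun i _ => by rw [if_neg (hne i)]), Finset.prod_const,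
            Finset.card_univ, Fintype.card_fin, hM_def,
            ← ENNReal.ofReal_pow (by positivity), ← ENNReal.ofReal_mul (by positivity)]
          congr 1
          ring
      _ ≤ volume ({z : Fin (d+1) → ℝ | euclN (y - z) < r} ∩ Q) := measure_mono hsub
  -- main chain
  have hKpos : (0:ℝ≥0∞) < K := by
    rw [hK_def]; exact ENNReal.ofReal_pos.2 (by positivity)
  have hKinv_ne_top : K⁻¹ ≠ ⊤ := ENNReal.inv_ne_top.2 hKpos.ne'
  have hMne_top : M ≠ ⊤ := ENNReal.ofReal_ne_top
  set g : ((Fin (d+1) → ℝ) × (Fin (d+1) → ℝ)) → ℝ≥0∞ :=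
    Set.indicator {p : (Fin (d+1) → ℝ) × (Fin (d+1) → ℝ) | euclN (p.2 - p.1) < r}
      (fun p => f p.2) with hg_def
  have hg : Measurable g := (hf.comp measurable_snd).indicator hS
  have hIz : ∀ z, ∫⁻ y in Ball d z r, f y = ∫⁻ y, g (z, y) := by
    intro z
    rw [← lintegral_indicator (measurableSet_Ball d z r)]
    refine lintegral_congr fun y => ?_
    by_cases hy : y ∈ Ball d z r
    · rw [Set.indicator_of_mem hy, hg_def,
        Set.indicator_of_mem (show (z, y) ∈ {p : (Fin (d+1) → ℝ) × (Fin (d+1) → ℝ) | euclN (p.2 - p.1) < r} from hy)]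
    · rw [Set.indicator_of_notMem hy, hg_def,
        Set.indicator_of_notMem (show (z, y) ∉ {p : (Fin (d+1) → ℝ) × (Fin (d+1) → ℝ) | euclN (p.2 - p.1) < r} from hy)]
  have swap : ∫⁻ z in Q, ∫⁻ y in Ball d z r, f y =
      ∫⁻ y, f y * volume ({z : Fin (d+1) → ℝ | euclN (y - z) < r} ∩ Q) := by
    calc ∫⁻ z in Q, ∫⁻ y in Ball d z r, f y = ∫⁻ z in Q, ∫⁻ y, g (z, y) :=
          lintegral_congr fun z => hIz z
      _ = ∫⁻ y, ∫⁻ z in Q, g (z, y) := by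
          exact lintegral_lintegral_swap hg.aemeasurable
      _ = ∫⁻ y, f y * volume ({z : Fin (d+1) → ℝ | euclN (y - z) < r} ∩ Q) := by
          refine lintegral_congr fun y => ?_
          have hT : MeasurableSet {z : Fin (d+1) → ℝ | euclN (y - z) < r} :=
            (isOpen_lt (continuous_euclN.comp (continuous_const.sub continuous_id))
              continuous_const).measurableSet
          calc ∫⁻ z in Q, g (z, y)
              = ∫⁻ z in Q, f y *
                  Set.indicator {z : Fin (d+1) → ℝ | euclN (y - z) < r} 1 z := by
                refine lintegral_congr fun z => ?_
                by_cases hzy : euclN (y - z) < r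
                · rw [hg_def, Set.indicator_of_mem (show (z, y) ∈ {p : (Fin (d+1) → ℝ) × (Fin (d+1) → ℝ) | euclN (p.2 - p.1) < r} from hzy),
                    Set.indicator_of_mem (show z ∈ {z : Fin (d+1) → ℝ | euclN (y - z) < r} from hzy)]
                  simp
                · rw [hg_def, Set.indicator_of_notMem (show (z, y) ∉ {p : (Fin (d+1) → ℝ) × (Fin (d+1) → ℝ) | euclN (p.2 - p.1) < r} from hzy),
                    Set.indicator_of_notMem
                      (show z ∉ {z : Fin (d+1) → ℝ | euclN (y - z) < r} from hzy)]
                  simp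
            _ = f y * ∫⁻ z in Q,
                  Set.indicator {z : Fin (d+1) → ℝ | euclN (y - z) < r} 1 z :=
                lintegral_const_mul _ (measurable_one.indicator hT)
            _ = f y * volume ({z : Fin (d+1) → ℝ | euclN (y - z) < r} ∩ Q) := by
                rw [lintegral_indicator_one hT, Measure.restrict_apply hT]
  have lower : M * ∫⁻ y in Q', f y ≤
      ∫⁻ y, f y * volume ({z : Fin (d+1) → ℝ | euclN (y - z) < r} ∩ Q) := by
    calc M * ∫⁻ y in Q', f y = ∫⁻ y in Q', M * f y :=
          (lintegral_const_mul' _ _ hMne_top).symm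
      _ ≤ ∫⁻ y in Q', f y * volume ({z : Fin (d+1) → ℝ | euclN (y - z) < r} ∩ Q) := by
          refine lintegral_mono_ae ((ae_restrict_iff' hQ'm).2 (Filter.Eventually.of_forall
            fun y hy => ?_))
          rw [mul_comm]
          exact mul_le_mul_right (h3 y hy) _
      _ ≤ ∫⁻ y, f y * volume ({z : Fin (d+1) → ℝ | euclN (y - z) < r} ∩ Q) :=
          lintegral_mono' Measure.restrict_le_self (le_refl _)
  have main1 : K⁻¹ * ∫⁻ z in Q, ∫⁻ y in Ball d z r, f y ≤
      ∫⁻ z in Q, (volume (Ball d z r))⁻¹ * ∫⁻ y in Ball d z r, f y := by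
    rw [← lintegral_const_mul' _ _ hKinv_ne_top]
    exact lintegral_mono fun z => mul_le_mul_left (ENNReal.inv_le_inv.2 (h1 z)) _
  have hconst : ENNReal.ofReal ((1/((2*((d:ℝ)+1))^d * 2^(2*d+3))) / (s^d * r)) ≤
      A⁻¹ * K⁻¹ * M := by
    rw [hA_def, hK_def, hM_def, ← ENNReal.ofReal_inv_of_pos (by positivity),
      ← ENNReal.ofReal_inv_of_pos (by positivity),
      ← ENNReal.ofReal_mul (by positivity), ← ENNReal.ofReal_mul (by positivity)]
    apply ENNReal.ofReal_le_ofReal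
    have key : (1/((2*((d:ℝ)+1))^d * 2^(2*d+3))) / (s^d * r) =
        ((2*s)^d * (2*s^2))⁻¹ * ((2*r)^(d+1))⁻¹ * ((2*ρ)^d * (s^2/2)) := by
      rw [hρ_def]
      have h2ρ : 2 * (r/(4*((d:ℝ)+1))) = r / (2*((d:ℝ)+1)) := by
        field_simp
        ring
      rw [h2ρ, div_pow, mul_pow 2 s, mul_pow 2 r, pow_succ]
      field_simp
      ring
    rw [key]
  calc ENNReal.ofReal ((1/((2*((d:ℝ)+1))^d * 2^(2*d+3))) / (s^d * r)) * ∫⁻ y in Q', f y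
      ≤ (A⁻¹ * K⁻¹ * M) * ∫⁻ y in Q', f y := mul_le_mul_left hconst _
    _ = A⁻¹ * (K⁻¹ * (M * ∫⁻ y in Q', f y)) := by rw [mul_assoc, mul_assoc]
    _ ≤ A⁻¹ * (K⁻¹ * ∫⁻ z in Q, ∫⁻ y in Ball d z r, f y) := by
        refine mul_le_mul_right (mul_le_mul_right ?_ _) _
        rw [swap]; exact lower
    _ ≤ (volume Q)⁻¹ * (K⁻¹ * ∫⁻ z in Q, ∫⁻ y in Ball d z r, f y) :=
        mul_le_mul_left (ENNReal.inv_le_inv.2 h2) _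
    _ ≤ (volume Q)⁻¹ * ∫⁻ z in Q, (volume (Ball d z r))⁻¹ * ∫⁻ y in Ball d z r, f y :=
        mul_le_mul_right main1 _

/-- for `0 < r,s < 1` with `s² ≤ r ≤ s` and `z ∈ Q_{s²,s}(x)`, the ball
`{|y-z|<r}` meets `Q_{r,s}(x)` in measure `≥ c·r^N`; consequently the double average
dominates `c'(s^{N-1}r)^{-1} ∫_{Q'_{r,s}(x)} f` for a fixed fractional shrinking `Q'`. -/
theorem ball_meets_cube (d : ℕ) :
    ∃ c : ℝ, 0 < c ∧ ∃ c' : ℝ, 0 < c' ∧ ∃ θ : ℝ, 0 < θ ∧ θ < 1 ∧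
      ∀ r s : ℝ, 0 < r → r < 1 → 0 < s → s < 1 → s ^ 2 ≤ r → r ≤ s →
        ∀ x : Fin (d+1) → ℝ,
        (∀ z ∈ Qcube d (s ^ 2) s x,
          ENNReal.ofReal (c * r ^ (d+1)) ≤ volume (Ball d z r ∩ Qcube d r s x)) ∧
        (∀ f : (Fin (d+1) → ℝ) → ℝ≥0∞, Measurable f →
          ENNReal.ofReal (c' / (s ^ d * r)) * ∫⁻ y in Qcube d (θ * r) (θ * s) x, f y ≤
            (volume (Qcube d (s ^ 2) s x))⁻¹ *
              ∫⁻ z in Qcube d (s ^ 2) s x,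
                (volume (Ball d z r))⁻¹ * ∫⁻ y in Ball d z r, f y) := by
  refine ⟨(1/(8*((d:ℝ)+1)))^(d+1), by positivity,
    1/((2*((d:ℝ)+1))^d * 2^(2*d+3)), by positivity,
    1/4, by norm_num, by norm_num, ?_⟩
  intro r s hr hr1 hs hs1 hsr hrs x
  constructor
  · intro z hz
    exact part1 d r s hr hs hsr hrs x z hz
  · intro f hf
    exact part2 d r s hr hs hsr hrs x f hf
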